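/- (Theorem 1, case (a).) Assume f and g are continuously differentiable on [0,1], p_a ≥ 0, 0 < p_l < R_L − f(1), p_l ≥ p_a, the uniqueness condition holds (sup over (x,y) ∈ Ω of (g'(y)/g(y))·(R_L − f(1−x))/(R_L − f(1−x) − g(y)) < 1/κ with κ = sup over Ω of max{(p_l − p_a)/(R_L − f(1−x) − g(y)), p_a/g(y)}), and that θ_lb(x) ≤ θ_ab(y) for all (x,y) ∈ Ω. Then the unique market equilibrium is (x†, 0), where x† is the unique point of (0,1) satisfying x† = 1 − p_l/(R_L − f(1−x†)); in particular the advanced service has zero market share at equilibrium. -/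

import Mathlib

open Set

/-- The feasible set of market shares: Ω = {(x,y) : x ≥ 0, y ≥ 0, x + y ≤ 1}. -/
def Omega : Set (ℝ × ℝ) := {p | 0 ≤ p.1 ∧ 0 ≤ p.2 ∧ p.1 + p.2 ≤ 1}

/-- θ_lb(x) = p_l / (R_L − f(1−x)). -/
noncomputable def thetaLB (RL : ℝ) (f : ℝ → ℝ) (pl : ℝ) (x : ℝ) : ℝ :=
  pl / (RL - f (1 - x))

/-- θ_ab(y) = p_a / g(y). -/
noncomputable def thetaAB (g : ℝ → ℝ) (pa : ℝ) (y : ℝ) : ℝ := pa / g y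

/-- θ_la(x,y) = (p_l − p_a) / (R_L − f(1−x) − g(y)). -/
noncomputable def thetaLA (RL : ℝ) (f g : ℝ → ℝ) (pl pa : ℝ) (p : ℝ × ℝ) : ℝ :=
  (pl - pa) / (RL - f (1 - p.1) - g p.2)

/-- The Stage-III update map h̃. -/
noncomputable def hmap (RL : ℝ) (f g : ℝ → ℝ) (pl pa : ℝ) (p : ℝ × ℝ) : ℝ × ℝ :=
  (max (1 - max (thetaLA RL f g pl pa p) (thetaLB RL f pl p.1)) 0,
   max (min (thetaLA RL f g pl pa p) 1 - thetaAB g pa p.2) 0)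

/-- Theorem 1, case (a): if θ_lb ≤ θ_ab throughout Ω, the unique market
equilibrium is (x†, 0) with x† the unique point of (0,1) satisfying
x† = 1 − p_l/(R_L − f(1−x†)); the advanced service has zero market share. -/
theorem stmt6
    (RL : ℝ) (f g : ℝ → ℝ) (f' g' : ℝ → ℝ)
    (hf_cont : ContinuousOn f (Set.Icc 0 1))
    (hf_nonneg : ∀ t ∈ Set.Icc (0:ℝ) 1, 0 ≤ f t)
    (hf_anti : AntitoneOn f (Set.Icc 0 1))
    (hg_cont : ContinuousOn g (Set.Icc 0 1))
    (hg_pos : ∀ t ∈ Set.Icc (0:ℝ) 1, 0 < g t)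
    (hg_mono : MonotoneOn g (Set.Icc 0 1))
    (hRL : ∀ p ∈ Omega, f (1 - p.1) + g p.2 < RL)
    -- f and g are continuously differentiable on [0,1], with derivatives f' and g'
    (hf' : ∀ t ∈ Set.Icc (0:ℝ) 1, HasDerivWithinAt f (f' t) (Set.Icc 0 1) t)
    (hf'_cont : ContinuousOn f' (Set.Icc 0 1))
    (hg' : ∀ t ∈ Set.Icc (0:ℝ) 1, HasDerivWithinAt g (g' t) (Set.Icc 0 1) t)
    (hg'_cont : ContinuousOn g' (Set.Icc 0 1))
    (pl pa : ℝ) (hpa : 0 ≤ pa) (hplpa : pa ≤ pl)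
    (hpl_pos : 0 < pl) (hpl_lt : pl < RL - f 1)
    -- the uniqueness condition
    (hcond :
      sSup ((fun p : ℝ × ℝ =>
          (g' p.2 / g p.2) * ((RL - f (1 - p.1)) / (RL - f (1 - p.1) - g p.2))) '' Omega)
        < 1 / sSup ((fun p : ℝ × ℝ =>
          max ((pl - pa) / (RL - f (1 - p.1) - g p.2)) (pa / g p.2)) '' Omega))
    -- case (a): θ_lb(x) ≤ θ_ab(y) for all (x,y) ∈ Ω
    (hcase : ∀ p ∈ Omega, thetaLB RL f pl p.1 ≤ thetaAB g pa p.2) :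
    ∃ xd, xd ∈ Set.Ioo (0:ℝ) 1 ∧ xd = 1 - pl / (RL - f (1 - xd)) ∧
      (∀ x' ∈ Set.Ioo (0:ℝ) 1, x' = 1 - pl / (RL - f (1 - x')) → x' = xd) ∧
      (xd, (0:ℝ)) ∈ Omega ∧ hmap RL f g pl pa (xd, 0) = (xd, 0) ∧
      (∀ q ∈ Omega, hmap RL f g pl pa q = q → q = (xd, 0)) := by

  -- basic positivity facts
  have hg0 : 0 < g 0 := hg_pos 0 ⟨le_refl 0, zero_le_one⟩
  have hDen : ∀ x ∈ Set.Icc (0:ℝ) 1, g 0 < RL - f (1 - x) := by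
    intro x hx
    have := hRL (x, 0) ⟨hx.1, le_refl 0, by simpa using hx.2⟩
    simp only at this; linarith
  have hDpos : ∀ x ∈ Set.Icc (0:ℝ) 1, 0 < RL - f (1 - x) :=
    fun x hx => lt_trans hg0 (hDen x hx)
  -- monotonicity of x ↦ pl / (RL - f (1-x))
  have hmono : ∀ a ∈ Set.Icc (0:ℝ) 1, ∀ b ∈ Set.Icc (0:ℝ) 1, a ≤ b →
      pl / (RL - f (1 - a)) ≤ pl / (RL - f (1 - b)) := by
    intro a ha b hb hab
    have hma : (1 - a) ∈ Set.Icc (0:ℝ) 1 := ⟨by linarith [ha.2], by linarith [ha.1]⟩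
    have hmb : (1 - b) ∈ Set.Icc (0:ℝ) 1 := ⟨by linarith [hb.2], by linarith [hb.1]⟩
    have hf1 : f (1 - a) ≤ f (1 - b) := hf_anti hmb hma (by linarith)
    have hdb : 0 < RL - f (1 - b) := hDpos b hb
    gcongr
  -- existence of xd via IVT
  have hFcont : ContinuousOn (fun x => x - 1 + pl / (RL - f (1 - x))) (Set.Icc (0:ℝ) 1) := by
    apply ContinuousOn.add
    · exact (continuousOn_id.sub continuousOn_const)
    · apply ContinuousOn.div continuousOn_const
      · apply ContinuousOn.sub continuousOn_const
        apply hf_cont.comp (continuous_const.sub continuous_id).continuousOn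
        intro x hx
        simp only [Set.mem_Icc] at hx ⊢
        simp only [Pi.sub_apply, id_eq]
        constructor <;> linarith [hx.1, hx.2]
      · intro x hx; exact (hDpos x hx).ne'
  have hD1 : 0 < RL - f 1 := lt_trans hpl_pos hpl_lt
  have hF0 : (fun x => x - 1 + pl / (RL - f (1 - x))) 0 < 0 := by
    have : pl / (RL - f (1 - 0)) < 1 := by
      rw [show (1:ℝ) - 0 = 1 from by norm_num]
      exact (div_lt_one hD1).mpr hpl_lt
    show (0:ℝ) - 1 + pl / (RL - f (1 - 0)) < 0
    linarith
  have hF1 : 0 < (fun x => x - 1 + pl / (RL - f (1 - x))) 1 := by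
    have hd0 : 0 < RL - f (1 - 1) := hDpos 1 ⟨zero_le_one, le_refl 1⟩
    have : 0 < pl / (RL - f (1 - 1)) := div_pos hpl_pos hd0
    show (0:ℝ) < 1 - 1 + pl / (RL - f (1 - 1))
    linarith
  obtain ⟨xd, hxdIoo, hxdF⟩ :=
    intermediate_value_Ioo (zero_le_one) hFcont (Set.mem_Ioo.mpr ⟨hF0, hF1⟩)
  have hxdeq : xd = 1 - pl / (RL - f (1 - xd)) := by
    simp only at hxdF; linarith
  -- uniqueness of the root
  have huniq : ∀ x' ∈ Set.Ioo (0:ℝ) 1, x' = 1 - pl / (RL - f (1 - x')) → x' = xd := by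
    intro x' hx' hroot
    have hx'I : x' ∈ Set.Icc (0:ℝ) 1 := ⟨hx'.1.le, hx'.2.le⟩
    have hxdI : xd ∈ Set.Icc (0:ℝ) 1 := ⟨hxdIoo.1.le, hxdIoo.2.le⟩
    rcases lt_trichotomy x' xd with h | h | h
    · have := hmono x' hx'I xd hxdI h.le; linarith
    · exact h
    · have := hmono xd hxdI x' hx'I h.le; linarith
  -- membership
  have hOm : (xd, (0:ℝ)) ∈ Omega := ⟨hxdIoo.1.le, le_refl 0, by simpa using hxdIoo.2.le⟩
  -- key inequality: θ_la ≤ θ_lb throughout Ω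
  have hkey : ∀ q ∈ Omega, thetaLA RL f g pl pa q ≤ thetaLB RL f pl q.1 := by
    intro q hq
    have hx1 : q.1 ∈ Set.Icc (0:ℝ) 1 := ⟨hq.1, by linarith [hq.2.1, hq.2.2]⟩
    have hy1 : q.2 ∈ Set.Icc (0:ℝ) 1 := ⟨hq.2.1, by linarith [hq.1, hq.2.2]⟩
    have hgy : 0 < g q.2 := hg_pos q.2 hy1
    have hRLq := hRL q hq
    have hDq : 0 < RL - f (1 - q.1) := hDpos q.1 hx1
    have hDGq : 0 < RL - f (1 - q.1) - g q.2 := by linarith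
    have hc := hcase q hq
    unfold thetaLB thetaAB at hc
    rw [div_le_div_iff₀ hDq hgy] at hc
    unfold thetaLA thetaLB
    rw [div_le_div_iff₀ hDGq hDq]
    nlinarith
  -- fixed point at (xd, 0)
  have hfix : ∀ q ∈ Omega, q.1 = 1 - pl / (RL - f (1 - q.1)) → q.2 = 0 → q.1 < 1 →
      hmap RL f g pl pa q = q := by
    intro q hq hroot hy hx1
    have hxI : q.1 ∈ Set.Icc (0:ℝ) 1 := ⟨hq.1, hx1.le⟩
    have hDq : 0 < RL - f (1 - q.1) := hDpos q.1 hxI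
    have hla := hkey q hq
    have hc := hcase q hq
    have hlb_eq : thetaLB RL f pl q.1 = 1 - q.1 := by unfold thetaLB; linarith
    have h1 : max (thetaLA RL f g pl pa q) (thetaLB RL f pl q.1) = thetaLB RL f pl q.1 :=
      max_eq_right hla
    have h2 : min (thetaLA RL f g pl pa q) 1 = thetaLA RL f g pl pa q :=
      min_eq_left (by linarith [hq.1])
    have h3 : max (1 - thetaLB RL f pl q.1) 0 = q.1 := by
      have : 1 - thetaLB RL f pl q.1 = q.1 := by unfold thetaLB; linarith
      rw [this]; exact max_eq_left hq.1
    unfold hmap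
    rw [h1, h2]
    have h4 : max (thetaLA RL f g pl pa q - thetaAB g pa q.2) 0 = 0 :=
      max_eq_right (by linarith)
    rw [h3, h4]
    exact Prod.ext rfl hy.symm
  have hfp : hmap RL f g pl pa (xd, 0) = (xd, 0) := by
    apply hfix (xd, 0) hOm
    · simpa using hxdeq
    · rfl
    · exact hxdIoo.2
  refine ⟨xd, hxdIoo, hxdeq, huniq, hOm, hfp, ?_⟩
  -- uniqueness of fixed points
  intro q hq hqfix
  have hx1 : q.1 ∈ Set.Icc (0:ℝ) 1 := ⟨hq.1, by linarith [hq.2.1, hq.2.2]⟩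
  have hy1 : q.2 ∈ Set.Icc (0:ℝ) 1 := ⟨hq.2.1, by linarith [hq.1, hq.2.2]⟩
  have hgy : 0 < g q.2 := hg_pos q.2 hy1
  have hDq : 0 < RL - f (1 - q.1) := hDpos q.1 hx1
  have hla := hkey q hq
  have hc := hcase q hq
  have hsnd : max (min (thetaLA RL f g pl pa q) 1 - thetaAB g pa q.2) 0 = q.2 :=
    congrArg Prod.snd hqfix
  have hfst : max (1 - max (thetaLA RL f g pl pa q) (thetaLB RL f pl q.1)) 0 = q.1 :=
    congrArg Prod.fst hqfix
  have hy0 : q.2 = 0 := by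
    rw [← hsnd]
    apply max_eq_right
    have hmin : min (thetaLA RL f g pl pa q) 1 ≤ thetaLA RL f g pl pa q := min_le_left _ _
    linarith
  rw [max_eq_right hla] at hfst
  have hlbpos : 0 < thetaLB RL f pl q.1 := div_pos hpl_pos hDq
  have hx0 : q.1 = 1 - thetaLB RL f pl q.1 := by
    rcases le_or_gt (1 - thetaLB RL f pl q.1) 0 with h | h
    · exfalso
      have hq10 : q.1 = 0 := by rw [max_eq_right h] at hfst; exact hfst.symm
      rw [hq10] at h
      have : thetaLB RL f pl 0 < 1 := by
        unfold thetaLB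
        rw [show (1:ℝ) - 0 = 1 by ring, div_lt_one hD1]
        exact hpl_lt
      unfold thetaLB at h this
      rw [show (1:ℝ) - 0 = 1 by ring] at h
      linarith
    · rw [max_eq_left h.le] at hfst; exact hfst.symm
  have hxIoo : q.1 ∈ Set.Ioo (0:ℝ) 1 := by
    constructor
    · rcases eq_or_lt_of_le hq.1 with h | h
      · exfalso
        have : thetaLB RL f pl q.1 < 1 := by
          unfold thetaLB
          rw [← h, show (1:ℝ) - 0 = 1 by ring, div_lt_one hD1]
          exact hpl_lt
        linarith
      · exact h
    · linarith
  have : q.1 = xd := huniq q.1 hxIoo (by unfold thetaLB at hx0; exact hx0)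
  exact Prod.ext this hy0
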